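/- Let k ≥ 1 be an integer and let n ≥ k. The minimum number of edges of a graph on n vertices that is saturated with respect to the property χ_{>k} of having chromatic number at least k+1 (i.e., χ(G) ≤ k but χ(G+e) ≥ k+1 for every non-edge e) is exactly (k−1)(n−1) − C(k−1,2); that is, sat(n, χ_{>k}) = (k−1)(n−1) − C(k−1,2). -/

import Mathlib

open SimpleGraph Finset

/-- The graph obtained from `G` by adding the edge `e`. -/
def addEdge {V : Type*} (G : SimpleGraph V) (e : Sym2 V) : SimpleGraph V :=
  G ⊔ SimpleGraph.fromEdgeSet {e}

/-- `G` is saturated with respect to the (monotone increasing) property `P`: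
`G` does not satisfy `P`, but adding any non-edge of `G` produces a graph satisfying `P`. -/
def saturatedWrt {V : Type*} (P : SimpleGraph V → Prop) (G : SimpleGraph V) : Prop :=
  ¬ P G ∧ ∀ e : Sym2 V, ¬ e.IsDiag → e ∉ G.edgeSet → P (addEdge G e)

/-- The property of having chromatic number at least `k + 1`. -/
def chiGt {V : Type*} (k : ℕ) (G : SimpleGraph V) : Prop :=
  ((k : ℕ∞) + 1) ≤ G.chromaticNumber

/-- complete multipartite graph from a coloring function -/
def mpG {n k : ℕ} (c : Fin n → Fin k) : SimpleGraph (Fin n) where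
  Adj u v := c u ≠ c v
  symm := ⟨fun _ _ h => Ne.symm h⟩
  loopless := ⟨fun _ h => h rfl⟩

instance {n k : ℕ} (c : Fin n → Fin k) : DecidableRel (mpG c).Adj :=
  fun u v => inferInstanceAs (Decidable ¬(c u = c v))

lemma mpG_adj {n k : ℕ} (c : Fin n → Fin k) (u v : Fin n) :
    (mpG c).Adj u v ↔ c u ≠ c v := Iff.rfl

lemma mpG_count {n k : ℕ} (c : Fin n → Fin k) :
    2 * (mpG c).edgeFinset.card
      + ∑ i : Fin k, (univ.filter fun v => c v = i).card ^ 2 = n ^ 2 := by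
  rw [← sum_degrees_eq_twice_card_edges]
  have hdeg : ∀ v : Fin n, (mpG c).degree v
      = (univ.filter fun u => ¬ (c u = c v)).card := by
    intro v
    rw [← card_neighborFinset_eq_degree]
    congr 1
    ext u
    simp [mpG_adj, ne_comm, eq_comm]
  have h1 : ∀ v : Fin n, (mpG c).degree v
      + (univ.filter fun u => c u = c v).card = n := by
    intro v
    rw [hdeg v, add_comm, card_filter_add_card_filter_not]
    simp
  have h2 : ∑ v : Fin n, ((mpG c).degree v
      + (univ.filter fun u => c u = c v).card) = n * n := by
    simp [h1]
  rw [sum_add_distrib] at h2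
  have h3 : ∑ v : Fin n, (univ.filter fun u => c u = c v).card
      = ∑ i : Fin k, (univ.filter fun v => c v = i).card ^ 2 := by
    rw [← Finset.sum_fiberwise_of_maps_to (g := c) (t := univ) (fun x _ => mem_univ _)]
    refine Finset.sum_congr rfl fun i _ => ?_
    rw [sq]
    rw [Finset.sum_congr rfl (fun v hv => ?_), Finset.sum_const, smul_eq_mul]
    simp only [mem_filter] at hv
    rw [hv.2]
  rw [h3] at h2
  rw [h2, sq]

lemma two_choose_two (x : ℕ) : 2 * Nat.choose x 2 = x * (x - 1) := by
  induction x with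
  | zero => simp
  | succ y ih =>
    rw [Nat.choose_succ_succ, Nat.choose_one_right, Nat.mul_add, ih]
    rcases y with _ | z
    · simp
    · simp only [Nat.succ_sub_one]
      ring

lemma sq_sum_le {ι : Type*} (s : Finset ι) (hs : s.Nonempty) (f : ι → ℕ)
    (hf : ∀ i ∈ s, 1 ≤ f i) :
    ∑ i ∈ s, f i ^ 2 ≤ (∑ i ∈ s, f i - s.card + 1) ^ 2 + (s.card - 1) := by
  induction hs using Finset.Nonempty.cons_induction with
  | singleton a => rw [Finset.sum_singleton, Finset.sum_singleton, Finset.card_singleton, Nat.sub_add_cancel (hf a (mem_singleton_self a))]; simp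
  | cons a s ha hs ih =>
    have hfs : ∀ i ∈ s, 1 ≤ f i := fun i hi => hf i (mem_cons_of_mem hi)
    have ih' := ih hfs
    have hT : s.card ≤ ∑ i ∈ s, f i := by
      calc s.card = ∑ _i ∈ s, 1 := by simp
        _ ≤ ∑ i ∈ s, f i := Finset.sum_le_sum hfs
    have hfa : 1 ≤ f a := hf a (mem_cons_self a s)
    rw [Finset.sum_cons, Finset.sum_cons, Finset.card_cons]
    obtain ⟨A, hA⟩ := Nat.exists_eq_add_of_le hfa
    obtain ⟨B, hB⟩ : ∃ B, ∑ i ∈ s, f i - s.card + 1 = B + 1 := ⟨_, rfl⟩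
    obtain ⟨r, hr⟩ : ∃ r, s.card = r + 1 := ⟨s.card - 1, by
      have := hs.card_pos; omega⟩
    have hsum : ∑ i ∈ s, f i = B + r + 1 := by omega
    have hgoal1 : f a + ∑ i ∈ s, f i - (s.card + 1) + 1 = A + B + 1 := by omega
    rw [hgoal1]
    have h2 : ∑ i ∈ s, f i ^ 2 ≤ (B + 1) ^ 2 + r := by
      rw [hB, hr] at ih'; simpa using ih'
    have h3 : f a ^ 2 = (A + 1) ^ 2 := by rw [hA]; ring_nf
    rw [h3, hr]
    simp only [Nat.add_sub_cancel]
    nlinarith [h2, Nat.zero_le (A * B)]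

lemma not_chiGt_of_colorable {V : Type*} {k : ℕ} {G : SimpleGraph V}
    (h : G.Colorable k) : ¬ chiGt k G := by
  intro hc
  have h1 := h.chromaticNumber_le
  have : ((k : ℕ∞) + 1) ≤ (k : ℕ∞) := le_trans hc h1
  rw [← Nat.cast_one, ← Nat.cast_add, Nat.cast_le] at this
  omega

lemma addEdge_adj {V : Type*} (G : SimpleGraph V) (u v a b : V) :
    (addEdge G s(u,v)).Adj a b ↔ G.Adj a b ∨ (s(a,b) = s(u,v) ∧ a ≠ b) := by
  simp [addEdge, fromEdgeSet_adj]

lemma sat_structure {n k : ℕ} {G : SimpleGraph (Fin n)}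
    (hG : saturatedWrt (chiGt k) G) (hk : 1 ≤ k) (hn : k ≤ n) :
    ∃ c : Fin n → Fin k, (∀ u v, G.Adj u v ↔ c u ≠ c v) ∧ Function.Surjective c := by
  have hcol : G.Colorable k := by
    by_contra h
    have hlt : (k : ℕ∞) < G.chromaticNumber :=
      lt_of_not_ge (fun hle => h (chromaticNumber_le_iff_colorable.mp hle))
    exact hG.1 ((ENat.add_one_le_iff (by simp)).mpr hlt)
  obtain ⟨C⟩ := hcol
  have key : ∀ u v : Fin n, u ≠ v → ¬ G.Adj u v → C u = C v := by
    intro u v huv hadj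
    by_contra hC
    have hsat := hG.2 s(u,v) (by simpa [Sym2.isDiag_iff_proj_eq] using huv)
      (by simpa [mem_edgeSet] using hadj)
    refine not_chiGt_of_colorable ⟨⟨C, ?_⟩⟩ hsat
    intro a b hab
    rw [addEdge_adj] at hab
    rcases hab with h | ⟨heq, hne⟩
    · exact C.valid h
    · rw [Sym2.eq_iff] at heq
      rcases heq with ⟨rfl, rfl⟩ | ⟨rfl, rfl⟩
      · exact hC
      · exact fun h => hC h.symm
  have hadj : ∀ u v, G.Adj u v ↔ C u ≠ C v := by
    intro u v
    constructor
    · exact fun h => C.valid h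
    · intro h
      by_contra hna
      exact h (key u v (fun he => h (by rw [he])) hna)
  refine ⟨C, hadj, ?_⟩
  by_cases hcomp : ∀ u v : Fin n, u ≠ v → G.Adj u v
  · have hinj : Function.Injective C := by
      intro u v h
      by_contra hne
      exact (hadj u v).mp (hcomp u v hne) h
    have hle : n ≤ k := by
      have := Fintype.card_le_of_injective C hinj
      simpa using this
    have : n = k := le_antisymm hle hn
    subst this
    exact Finite.surjective_of_injective hinj
  · push_neg at hcomp
    obtain ⟨u, v, huv, hnadj⟩ := hcomp
    intro i
    by_contra hi
    push_neg at hi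
    have hsat := hG.2 s(u,v) (by simpa [Sym2.isDiag_iff_proj_eq] using huv)
      (by simpa [mem_edgeSet] using hnadj)
    refine not_chiGt_of_colorable ⟨⟨Function.update C u i, ?_⟩⟩ hsat
    intro a b hab
    rw [addEdge_adj] at hab
    have hCi : ∀ w : Fin n, w ≠ u → Function.update C u i w = C w :=
      fun w hw => Function.update_of_ne hw i C
    rcases hab with h | ⟨heq, hne⟩
    · rcases eq_or_ne a u with rfl | hau
      · have hbu : b ≠ a := (G.ne_of_adj h).symm
        rw [Function.update_self, hCi b hbu]
        exact fun hh => hi b hh.symm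
      · rw [hCi a hau]
        rcases eq_or_ne b u with rfl | hbu
        · rw [Function.update_self]
          exact fun hh => hi a hh
        · rw [hCi b hbu]
          exact C.valid h
    · rw [Sym2.eq_iff] at heq
      rcases heq with ⟨rfl, rfl⟩ | ⟨rfl, rfl⟩
      · rw [Function.update_self, hCi b (Ne.symm huv)]
        exact fun hh => hi b hh.symm
      · rw [hCi a (Ne.symm huv), Function.update_self]
        exact fun hh => hi a hh

lemma card_filter_val_lt (n m : ℕ) (h : m ≤ n) :
    (univ.filter fun v : Fin n => (v : ℕ) < m).card = m := by
  have himg : (univ : Finset (Fin m)).image (Fin.castLE h)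
      = univ.filter fun v : Fin n => (v : ℕ) < m := by
    ext b
    simp only [mem_image, mem_filter, mem_univ, true_and]
    constructor
    · rintro ⟨a, _, rfl⟩
      exact a.isLt
    · intro hb
      exact ⟨⟨b, hb⟩, rfl⟩
  rw [← himg, Finset.card_image_of_injective _ (Fin.castLE_injective h)]
  simp

lemma card_filter_val_eq (n j : ℕ) (h : j < n) :
    (univ.filter fun v : Fin n => (v : ℕ) = j).card = 1 := by
  rw [Finset.card_eq_one]
  refine ⟨⟨j, h⟩, ?_⟩
  ext v
  simp [Fin.ext_iff]

/-- For `k ≥ 1` and `n ≥ k`, the minimum number of edges of a graph on `n` vertices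
saturated with respect to the property of having chromatic number at least `k + 1` is
exactly `(k-1)(n-1) - C(k-1,2)`. -/
theorem statement_10 (k n : ℕ) (hk : 1 ≤ k) (hn : k ≤ n) :
    IsLeast
      {m : ℕ | ∃ G : SimpleGraph (Fin n),
        saturatedWrt (chiGt k) G ∧ G.edgeSet.ncard = m}
      ((k - 1) * (n - 1) - (k - 1).choose 2) := by
  have hkn : k - 1 < k := by omega
  -- the witness coloring
  set c₀ : Fin n → Fin k := fun v => ⟨min (v : ℕ) (k - 1), by omega⟩ with hc₀
  have hc₀val : ∀ v : Fin n, ((c₀ v : ℕ)) = min (v : ℕ) (k - 1) := fun v => rfl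
  constructor
  · -- membership: mpG c₀ is saturated with the right number of edges
    refine ⟨mpG c₀, ⟨?_, ?_⟩, ?_⟩
    · exact not_chiGt_of_colorable ⟨SimpleGraph.Coloring.mk c₀ (fun h => h)⟩
    · intro e hd he
      induction e using Sym2.ind with
      | _ u v =>
      rw [Sym2.isDiag_iff_proj_eq] at hd
      rw [mem_edgeSet, mpG_adj] at he
      push_neg at he
      have huvne : u ≠ v := hd
      have hvals : (u : ℕ) ≠ (v : ℕ) := fun h => hd (Fin.ext h)
      have hce : ((c₀ u : ℕ)) = ((c₀ v : ℕ)) := congrArg Fin.val he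
      rw [hc₀val, hc₀val] at hce
      have hu : k - 1 ≤ (u : ℕ) := by omega
      have hv : k - 1 ≤ (v : ℕ) := by omega
      -- build a (k+1)-clique
      set s : Finset (Fin n) :=
        (univ.filter fun w : Fin n => (w : ℕ) < k - 1) ∪ {u, v} with hs
      have hcard : s.card = k + 1 := by
        rw [hs, Finset.card_union_of_disjoint, card_filter_val_lt n (k-1) (by omega)]
        · rw [Finset.card_insert_of_notMem (by simpa using huvne), Finset.card_singleton]
          omega
        · rw [Finset.disjoint_left]
          intro w hw hw2
          simp only [mem_filter, mem_univ, true_and] at hw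
          simp only [mem_insert, mem_singleton] at hw2
          rcases hw2 with rfl | rfl <;> omega
      have hclique : (addEdge (mpG c₀) s(u,v)).IsClique (s : Set (Fin n)) := by
        intro a ha b hb hab
        simp only [hs, coe_union, coe_filter, coe_insert, coe_singleton, Set.mem_union,
          Set.mem_setOf_eq, Set.mem_insert_iff, Set.mem_singleton_iff, mem_univ,
          true_and] at ha hb
        rw [addEdge_adj]
        have hvalne : (a : ℕ) ≠ (b : ℕ) := fun h => hab (Fin.ext h)
        have hGadj : ∀ x y : Fin n, ((c₀ x : ℕ)) ≠ ((c₀ y : ℕ)) → (mpG c₀).Adj x y := by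
          intro x y hxy
          rw [mpG_adj]
          exact fun h => hxy (congrArg Fin.val h)
        rcases ha with ha | rfl | rfl <;> rcases hb with hb | rfl | rfl
        · exact Or.inl (hGadj a b (by rw [hc₀val, hc₀val]; omega))
        · exact Or.inl (hGadj a b (by rw [hc₀val, hc₀val]; omega))
        · exact Or.inl (hGadj a b (by rw [hc₀val, hc₀val]; omega))
        · exact Or.inl (hGadj a b (by rw [hc₀val, hc₀val]; omega))
        · exact absurd rfl hab
        · exact Or.inr ⟨rfl, hab⟩
        · exact Or.inl (hGadj a b (by rw [hc₀val, hc₀val]; omega))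
        · exact Or.inr ⟨Sym2.eq_swap, hab⟩
        · exact absurd rfl hab
      have hle := hclique.card_le_chromaticNumber
      rw [hcard] at hle
      unfold chiGt
      calc ((k : ℕ∞) + 1) = ((k + 1 : ℕ) : ℕ∞) := by push_cast; ring
        _ ≤ _ := hle
    · -- edge count
      rw [show (mpG c₀).edgeSet.ncard = (mpG c₀).edgeFinset.card by
        rw [← coe_edgeFinset, Set.ncard_coe_finset]]
      have hfib : ∀ i : Fin k, (univ.filter fun v => c₀ v = i).card
          = if (i : ℕ) < k - 1 then 1 else n - (k - 1) := by
        intro i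
        split_ifs with hi
        · rw [show (univ.filter fun v => c₀ v = i)
              = (univ.filter fun v : Fin n => (v : ℕ) = (i : ℕ)) from ?_]
          · exact card_filter_val_eq n i (by omega)
          · ext v
            simp only [mem_filter, mem_univ, true_and, Fin.ext_iff, hc₀val]
            omega
        · have hieq : (i : ℕ) = k - 1 := by have := i.isLt; omega
          have hsplit := card_filter_add_card_filter_not
            (s := (univ : Finset (Fin n))) (fun v : Fin n => (v : ℕ) < k - 1)
          rw [card_filter_val_lt n (k-1) (by omega)] at hsplit
          rw [Finset.card_univ, Fintype.card_fin] at hsplit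
          rw [show (univ.filter fun v => c₀ v = i)
              = (univ.filter fun v : Fin n => ¬ ((v : ℕ) < k - 1)) from ?_]
          · omega
          · ext v
            simp only [mem_filter, mem_univ, true_and, Fin.ext_iff, hc₀val, hieq]
            omega
      have hS : ∑ i : Fin k, (univ.filter fun v => c₀ v = i).card ^ 2
          = (k - 1) + (n - (k - 1)) ^ 2 := by
        calc ∑ i : Fin k, (univ.filter fun v => c₀ v = i).card ^ 2
            = ∑ i : Fin k, (if (i : ℕ) < k - 1 then 1 else (n - (k - 1)) ^ 2) := by
              refine Finset.sum_congr rfl fun i _ => ?_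
              rw [hfib i]
              split_ifs <;> ring
          _ = (k - 1) + (n - (k - 1)) ^ 2 := by
              rw [Finset.sum_ite, Finset.sum_const, Finset.sum_const,
                card_filter_val_lt k (k-1) (by omega)]
              have hsplit := card_filter_add_card_filter_not
                (s := (univ : Finset (Fin k))) (fun i : Fin k => (i : ℕ) < k - 1)
              rw [card_filter_val_lt k (k-1) (by omega)] at hsplit
              rw [Finset.card_univ, Fintype.card_fin] at hsplit
              rw [show (univ.filter fun i : Fin k => ¬ ((i : ℕ) < k - 1)).card = 1 by omega]
              simp
      have hcnt := mpG_count c₀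
      rw [hS] at hcnt
      have h2c := two_choose_two (k - 1)
      have hkey : 2 * ((k-1) * (n-1))
          = 2 * (mpG c₀).edgeFinset.card + 2 * ((k-1).choose 2) := by
        obtain ⟨a, hka⟩ : ∃ a, k = a + 1 := ⟨k - 1, by omega⟩
        subst hka
        obtain ⟨t, hnt⟩ : ∃ t, n = a + 1 + t := ⟨n - (a+1), by omega⟩
        subst hnt
        simp only [Nat.add_sub_cancel] at hcnt h2c ⊢
        have hn1 : a + 1 + t - 1 = a + t := by omega
        have ht1 : a + 1 + t - a = t + 1 := by omega
        rw [hn1]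
        rw [ht1] at hcnt
        rcases Nat.eq_zero_or_pos a with rfl | ha
        · have hch : Nat.choose 0 2 = 0 := rfl
          rw [hch]
          nlinarith [hcnt]
        · obtain ⟨a', rfl⟩ : ∃ a', a = a' + 1 := ⟨a - 1, by omega⟩
          simp only [Nat.add_sub_cancel] at h2c
          nlinarith [hcnt, h2c]
      have heq : (k-1) * (n-1) = (mpG c₀).edgeFinset.card + (k-1).choose 2 := by
        refine Nat.eq_of_mul_eq_mul_left (show 0 < 2 by norm_num) ?_
        rw [Nat.mul_add]
        exact hkey
      rw [heq, Nat.add_sub_cancel]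
  · -- lower bound
    rintro m ⟨G, hG, rfl⟩
    obtain ⟨c, hadj, hsurj⟩ := sat_structure hG hk hn
    have hGeq : G = mpG c := by
      ext u v
      rw [mpG_adj]
      exact hadj u v
    subst hGeq
    have hcnt := mpG_count c
    rw [show (mpG c).edgeSet.ncard = (mpG c).edgeFinset.card by
      rw [← coe_edgeFinset, Set.ncard_coe_finset]]
    -- fibers nonempty
    have hfib : ∀ i ∈ (univ : Finset (Fin k)), 1 ≤ (univ.filter fun v => c v = i).card := by
      intro i _
      obtain ⟨v, hv⟩ := hsurj i
      exact Finset.card_pos.mpr ⟨v, by simp [hv]⟩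
    have hsum : ∑ i : Fin k, (univ.filter fun v => c v = i).card = n := by
      rw [← Finset.card_eq_sum_card_fiberwise (f := c) (s := univ) (t := univ)
        (fun x _ => mem_univ _)]
      simp
    have hne : (univ : Finset (Fin k)).Nonempty := by
      rw [← Finset.card_pos]; simp; omega
    have hopt := sq_sum_le univ hne (fun i => (univ.filter fun v => c v = i).card) hfib
    rw [hsum, Finset.card_univ, Fintype.card_fin] at hopt
    -- now pure arithmetic
    set m := (mpG c).edgeFinset.card
    set S := ∑ i : Fin k, (univ.filter fun v => c v = i).card ^ 2
    have h2c := two_choose_two (k - 1)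
    have key : 2 * ((k-1) * (n-1)) ≤ 2 * m + (k-1) * (k-1-1) := by
      obtain ⟨a, rfl⟩ : ∃ a, k = a + 1 := ⟨k - 1, by omega⟩
      obtain ⟨t, rfl⟩ : ∃ t, n = a + 1 + t := ⟨n - (a+1), by omega⟩
      simp only [Nat.add_sub_cancel] at hopt ⊢
      have hS : S ≤ (t + 1) ^ 2 + a := by
        have h9 : a + 1 + t - (a + 1) + 1 = t + 1 := by omega
        rw [h9] at hopt
        omega
      have hn1 : a + 1 + t - 1 = a + t := by omega
      rw [hn1]
      rcases Nat.eq_zero_or_pos a with rfl | ha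
      · simp
      · obtain ⟨a', rfl⟩ : ∃ a', a = a' + 1 := ⟨a - 1, by omega⟩
        simp only [Nat.add_sub_cancel]
        nlinarith [hcnt, hS]
    have hfin : (k-1) * (n-1) ≤ m + (k-1).choose 2 := by
      have : 2 * ((k-1) * (n-1)) ≤ 2 * (m + (k-1).choose 2) := by omega
      exact Nat.le_of_mul_le_mul_left this (by norm_num)
    omega
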